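/- Let n ≥ 5, let m_1, …, m_n ∈ SL(2,ℂ), and let ε_1, …, ε_n ∈ {+1, −1}. Then there exists a nonzero vector (v_1, …, v_n) ∈ ℂ^n such that for every M ∈ SL(2,ℂ), Σ_{i=1}^n v_i · tr(m_i · M^{ε_i}) = 0, where M^{ε_i} means M if ε_i = +1 and M⁻¹ if ε_i = −1. -/
import Mathlib


/-- The trace of a `2×2` matrix in `SL(2,ℂ)`. -/
noncomputable def tr2 (x : Matrix.SpecialLinearGroup (Fin 2) ℂ) : ℂ :=
  Matrix.trace (x : Matrix (Fin 2) (Fin 2) ℂ)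

/-- Coefficient vector of the linear functional `M ↦ tr(m M^e)` in the entries of `M`. -/
noncomputable def coef2 (m : Matrix.SpecialLinearGroup (Fin 2) ℂ) (e : ℤ) :
    Fin 2 × Fin 2 → ℂ :=
  if e = 1 then fun p => (m : Matrix (Fin 2) (Fin 2) ℂ) p.2 p.1
  else fun p => (-1 : ℂ) ^ ((p.1 : ℕ) + (p.2 : ℕ)) *
    (m : Matrix (Fin 2) (Fin 2) ℂ) (1 - p.1) (1 - p.2)

lemma tr2_eq_sum (m : Matrix.SpecialLinearGroup (Fin 2) ℂ) (e : ℤ)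
    (he : e = 1 ∨ e = -1) (M : Matrix.SpecialLinearGroup (Fin 2) ℂ) :
    tr2 (m * M ^ e) = ∑ p : Fin 2 × Fin 2, coef2 m e p * (M : Matrix (Fin 2) (Fin 2) ℂ) p.1 p.2 := by
  rcases he with he | he
  · subst he
    simp only [coef2, if_pos rfl, zpow_one, tr2, Matrix.SpecialLinearGroup.coe_mul]
    rw [Matrix.trace_fin_two]
    simp [Matrix.mul_apply, Fin.sum_univ_two, Fintype.sum_prod_type]
    ring
  · subst he
    have hinv : ((M ^ (-1 : ℤ) : Matrix.SpecialLinearGroup (Fin 2) ℂ) : Matrix (Fin 2) (Fin 2) ℂ)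
        = Matrix.adjugate (M : Matrix (Fin 2) (Fin 2) ℂ) := by
      rw [zpow_neg_one]
      exact Matrix.SpecialLinearGroup.coe_inv M
    simp only [coef2, tr2, Matrix.SpecialLinearGroup.coe_mul, hinv,
      Matrix.adjugate_fin_two]
    rw [Matrix.trace_fin_two]
    simp [Matrix.mul_apply, Fin.sum_univ_two, Fintype.sum_prod_type]
    ring

/-- **Key step in the proof of Theorem 2 of the paper.**
Let `n ≥ 5`, `m_1,…,m_n ∈ SL(2,ℂ)` and `ε_1,…,ε_n ∈ {±1}`.  Then there is a nonzero vector
`(v_1,…,v_n) ∈ ℂⁿ` such that `Σ_i v_i ⬝ tr(m_i M^{ε_i}) = 0` for every `M ∈ SL(2,ℂ)`. -/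
theorem exists_left_null_vector (n : ℕ) (hn : 5 ≤ n)
    (m : Fin n → Matrix.SpecialLinearGroup (Fin 2) ℂ)
    (ε : Fin n → ℤ) (hε : ∀ i, ε i = 1 ∨ ε i = -1) :
    ∃ v : Fin n → ℂ, v ≠ 0 ∧
      ∀ M : Matrix.SpecialLinearGroup (Fin 2) ℂ,
        ∑ i, v i * tr2 (m i * M ^ (ε i)) = 0 := by
  set c : Fin n → (Fin 2 × Fin 2 → ℂ) := fun i => coef2 (m i) (ε i) with hc
  have hdep : ¬ LinearIndependent ℂ c := by
    intro h
    have := h.fintype_card_le_finrank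
    simp [Module.finrank_pi] at this
    omega
  rw [Fintype.not_linearIndependent_iff] at hdep
  obtain ⟨g, hg0, j, hj⟩ := hdep
  refine ⟨g, ?_, ?_⟩
  · intro h
    exact hj (by simp [h])
  · intro M
    have hsum : ∀ i, tr2 (m i * M ^ (ε i)) =
        ∑ p : Fin 2 × Fin 2, c i p * (M : Matrix (Fin 2) (Fin 2) ℂ) p.1 p.2 :=
      fun i => tr2_eq_sum (m i) (ε i) (hε i) M
    calc ∑ i, g i * tr2 (m i * M ^ (ε i))
        = ∑ i, ∑ p : Fin 2 × Fin 2, g i * c i p * (M : Matrix (Fin 2) (Fin 2) ℂ) p.1 p.2 := by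
          simp only [hsum, Finset.mul_sum, mul_assoc]
      _ = ∑ p : Fin 2 × Fin 2, (∑ i, g i * c i p) * (M : Matrix (Fin 2) (Fin 2) ℂ) p.1 p.2 := by
          rw [Finset.sum_comm]; simp [Finset.sum_mul]
      _ = 0 := by
          apply Finset.sum_eq_zero
          intro p _
          have : (∑ i, g i • c i) p = 0 := by rw [hg0]; rfl
          have h0 : ∑ i, g i * c i p = 0 := by simpa [Finset.sum_apply] using this
          rw [h0, zero_mul]
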